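/- Let p ≥ 2, τ² = (τ²₁,…,τ²_p) ∈ (0,∞)ᵖ and w² = (w²₁,…,w²_{p−1}) ∈ (0,∞)^{p−1}. Then det(Σ⁻¹_{τ,w}) ≥ ∏_{i=1}^p 1/(2τ²ᵢ). -/

import Mathlib

open Matrix

/-- The fused lasso precision matrix `Σ⁻¹_{τ,w}`: the symmetric tridiagonal `p×p` matrix
with diagonal entries `1/τ₁ + 1/w₁` at `(0,0)`, `1/τᵢ + 1/w_{i−1} + 1/wᵢ` at interior
`(i,i)`, `1/τ_p + 1/w_{p−1}` at `(p−1,p−1)`, and entries `−1/wᵢ` at `(i,i+1)` and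
`(i+1,i)`.  (Here `τ i` plays the role of `τ²_{i+1}` and `w i` of `w²_{i+1}`.) -/
noncomputable def fusedPrec (p : ℕ) (τ : Fin p → ℝ) (w : Fin (p - 1) → ℝ) :
    Matrix (Fin p) (Fin p) ℝ := fun i j =>
  if i = j then
    (τ i)⁻¹
      + (if h : (i : ℕ) < p - 1 then (w ⟨i, h⟩)⁻¹ else 0)
      + (if h : 0 < (i : ℕ) ∧ (i : ℕ) - 1 < p - 1 then (w ⟨(i : ℕ) - 1, h.2⟩)⁻¹ else 0)
  else if h : (j : ℕ) = (i : ℕ) + 1 ∧ (i : ℕ) < p - 1 then -(w ⟨i, h.2⟩)⁻¹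
  else if h : (i : ℕ) = (j : ℕ) + 1 ∧ (j : ℕ) < p - 1 then -(w ⟨j, h.2⟩)⁻¹
  else 0

section DetAux

variable {n : Type*} [Fintype n] [DecidableEq n]

lemma one_le_det_one_add {M : Matrix n n ℝ} (hM : M.PosSemidef) :
    (1 : ℝ) ≤ (1 + M).det := by
  set U : Matrix n n ℝ := (hM.1.eigenvectorUnitary : Matrix n n ℝ)
  have hU : U * star U = 1 := (Matrix.mem_unitaryGroup_iff).mp hM.1.eigenvectorUnitary.2
  have h1 : 1 + M = U * (1 + diagonal (RCLike.ofReal ∘ hM.1.eigenvalues)) * star U := by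
    rw [mul_add, add_mul, mul_one, hU]
    congr 1
    exact hM.1.spectral_theorem
  rw [h1, det_mul_right_comm, hU, one_mul]
  have h2 : (1 : Matrix n n ℝ) + diagonal (RCLike.ofReal ∘ hM.1.eigenvalues)
      = diagonal (fun i => 1 + hM.1.eigenvalues i) := by
    rw [← diagonal_one, diagonal_add]
    rfl
  rw [h2, det_diagonal]
  have := Finset.prod_le_prod (s := Finset.univ) (f := fun _ : n => (1:ℝ))
    (g := fun i => 1 + hM.1.eigenvalues i)
    (fun i _ => zero_le_one) (fun i _ => by simpa using hM.eigenvalues_nonneg i)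
  simpa using this

open scoped MatrixOrder in
lemma det_le_det_add {A B : Matrix n n ℝ} (hA : A.PosDef) (hB : B.PosSemidef) :
    A.det ≤ (A + B).det := by
  set S := CFC.sqrt A with hSdef
  have hSS : S * S = A := CFC.sqrt_mul_sqrt_self A hA.posSemidef.nonneg
  have hdet : S.det * S.det = A.det := by rw [← det_mul, hSS]
  have hdetS : IsUnit S.det := by
    have hApos := hA.det_pos
    refine isUnit_iff_ne_zero.mpr fun h => ?_
    exact hApos.ne (by rw [← hdet, h, mul_zero])
  have hSinv : Sᴴ⁻¹ = S⁻¹ := by rw [show Sᴴ = S from (CFC.sqrt_nonneg A).posSemidef.1.eq]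
  have hM : (S⁻¹ * B * S⁻¹).PosSemidef := by
    have := hB.mul_mul_conjTranspose_same S⁻¹
    rwa [conjTranspose_nonsing_inv, hSinv] at this
  have key : A + B = S * (1 + S⁻¹ * B * S⁻¹) * S := by
    rw [mul_add, mul_one, add_mul, hSS]
    congr 1
    have : S * (S⁻¹ * B * S⁻¹) * S = (S * S⁻¹) * B * (S⁻¹ * S) := by
      simp only [Matrix.mul_assoc]
    rw [this, mul_nonsing_inv _ hdetS, nonsing_inv_mul _ hdetS, one_mul, mul_one]
  rw [key, det_mul, det_mul]
  calc A.det = A.det * 1 := (mul_one _).symm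
    _ ≤ A.det * (1 + S⁻¹ * B * S⁻¹).det := by
        exact mul_le_mul_of_nonneg_left (one_le_det_one_add hM) hA.det_pos.le
    _ = S.det * (1 + S⁻¹ * B * S⁻¹).det * S.det := by rw [← hdet]; ring

omit [DecidableEq n] in
lemma posSemidef_vecMulVec_self (v : n → ℝ) : (vecMulVec v v).PosSemidef := by
  refine PosSemidef.of_dotProduct_mulVec_nonneg ?_ ?_
  · ext i j
    simp [vecMulVec_apply, conjTranspose_apply, mul_comm]
  · intro x
    have h1 : vecMulVec v v *ᵥ x = (v ⬝ᵥ x) • v := by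
      ext i
      simp only [vecMulVec_apply, mulVec, dotProduct, Pi.smul_apply, smul_eq_mul,
        Finset.sum_mul]
      exact Finset.sum_congr rfl fun j _ => by ring
    rw [h1]
    have : star x ⬝ᵥ (v ⬝ᵥ x) • v = (v ⬝ᵥ x) * (v ⬝ᵥ x) := by
      simp only [dotProduct_smul, smul_eq_mul]
      congr 1
      simp [dotProduct, mul_comm]
    rw [this]
    exact mul_self_nonneg _

end DetAux

lemma sum_ite_coe_eq {n : ℕ} (c : ℕ) (f : Fin n → ℝ) :
    (∑ k : Fin n, if (k : ℕ) = c then f k else 0) = if h : c < n then f ⟨c, h⟩ else 0 := by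
  split_ifs with h
  · rw [Finset.sum_eq_single ⟨c, h⟩]
    · simp
    · intro k _ hk
      rw [if_neg fun hc => hk (Fin.ext hc)]
    · simp
  · refine Finset.sum_eq_zero fun k _ => ?_
    have hk := k.isLt
    rw [if_neg (by omega)]

lemma sum_ite_coe_succ_eq {n : ℕ} (c : ℕ) (f : Fin n → ℝ) :
    (∑ k : Fin n, if (k : ℕ) + 1 = c then f k else 0)
      = if h : 0 < c ∧ c - 1 < n then f ⟨c - 1, h.2⟩ else 0 := by
  split_ifs with h
  · have h' : (∑ k : Fin n, if (k : ℕ) + 1 = c then f k else 0)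
        = ∑ k : Fin n, if (k : ℕ) = c - 1 then f k else 0 := by
      refine Finset.sum_congr rfl fun k _ => ?_
      have hk := k.isLt
      split_ifs <;> first | rfl | omega
    rw [h', sum_ite_coe_eq, dif_pos h.2]
  · refine Finset.sum_eq_zero fun k _ => ?_
    have hk := k.isLt
    rw [if_neg (by omega)]

/-- The vectors in the rank-one decomposition of the path-graph Laplacian part. -/
noncomputable def fusedVec (p : ℕ) (w : Fin (p - 1) → ℝ) (k : Fin (p - 1)) : Fin p → ℝ :=
  fun i => Real.sqrt (w k)⁻¹ *
    (if (i : ℕ) = (k : ℕ) + 1 then 1 else if (i : ℕ) = (k : ℕ) then -1 else 0)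

lemma fusedPrec_decomp (p : ℕ) (τ : Fin p → ℝ) (w : Fin (p - 1) → ℝ) (hw : ∀ i, 0 < w i) :
    fusedPrec p τ w = diagonal (fun i => (τ i)⁻¹)
      + ∑ k : Fin (p - 1), vecMulVec (fusedVec p w k) (fusedVec p w k) := by
  ext i j
  rw [Matrix.add_apply, Matrix.sum_apply]
  have hterm : ∀ k : Fin (p - 1), vecMulVec (fusedVec p w k) (fusedVec p w k) i j
      = (w k)⁻¹ * ((if (i : ℕ) = (k : ℕ) + 1 then (1:ℝ) else if (i : ℕ) = (k : ℕ) then -1 else 0)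
        * (if (j : ℕ) = (k : ℕ) + 1 then (1:ℝ) else if (j : ℕ) = (k : ℕ) then -1 else 0)) := by
    intro k
    rw [vecMulVec_apply]
    unfold fusedVec
    have hs : Real.sqrt (w k)⁻¹ * Real.sqrt (w k)⁻¹ = (w k)⁻¹ :=
      Real.mul_self_sqrt (inv_nonneg.mpr (hw k).le)
    rw [mul_mul_mul_comm, hs]
  rw [Finset.sum_congr rfl fun k _ => hterm k]
  by_cases hij : i = j
  · subst hij
    rw [fusedPrec, if_pos rfl, diagonal_apply_eq]
    have h1 : ∀ k : Fin (p - 1),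
        (w k)⁻¹ * ((if (i : ℕ) = (k : ℕ) + 1 then (1:ℝ) else if (i : ℕ) = (k : ℕ) then -1 else 0)
          * (if (i : ℕ) = (k : ℕ) + 1 then (1:ℝ) else if (i : ℕ) = (k : ℕ) then -1 else 0))
        = (if (k : ℕ) = (i : ℕ) then (w k)⁻¹ else 0)
          + (if (k : ℕ) + 1 = (i : ℕ) then (w k)⁻¹ else 0) := by
      intro k
      split_ifs <;> first | ring1 | (exfalso; omega)
    rw [Finset.sum_congr rfl fun k _ => h1 k, Finset.sum_add_distrib, sum_ite_coe_eq,
      sum_ite_coe_succ_eq]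
    ring
  · have hne : (i : ℕ) ≠ (j : ℕ) := fun h => hij (Fin.ext h)
    by_cases h1 : (j : ℕ) = (i : ℕ) + 1
    · have hi : (i : ℕ) < p - 1 := by have := j.isLt; omega
      rw [fusedPrec, if_neg hij, dif_pos ⟨h1, hi⟩, diagonal_apply_ne _ hij]
      have h2 : ∀ k : Fin (p - 1),
          (w k)⁻¹ * ((if (i : ℕ) = (k : ℕ) + 1 then (1:ℝ) else if (i : ℕ) = (k : ℕ) then -1 else 0)
            * (if (j : ℕ) = (k : ℕ) + 1 then (1:ℝ) else if (j : ℕ) = (k : ℕ) then -1 else 0))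
          = -(if (k : ℕ) = (i : ℕ) then (w k)⁻¹ else 0) := by
        intro k
        split_ifs <;> first | ring1 | (exfalso; omega)
      rw [Finset.sum_congr rfl fun k _ => h2 k, Finset.sum_neg_distrib, sum_ite_coe_eq,
        dif_pos hi]
      ring
    · by_cases h2 : (i : ℕ) = (j : ℕ) + 1
      · have hj : (j : ℕ) < p - 1 := by have := i.isLt; omega
        rw [fusedPrec, if_neg hij, dif_neg (by omega), dif_pos ⟨h2, hj⟩,
          diagonal_apply_ne _ hij]
        have h3 : ∀ k : Fin (p - 1),
            (w k)⁻¹ * ((if (i : ℕ) = (k : ℕ) + 1 then (1:ℝ)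
                else if (i : ℕ) = (k : ℕ) then -1 else 0)
              * (if (j : ℕ) = (k : ℕ) + 1 then (1:ℝ) else if (j : ℕ) = (k : ℕ) then -1 else 0))
            = -(if (k : ℕ) = (j : ℕ) then (w k)⁻¹ else 0) := by
          intro k
          split_ifs <;> first | ring1 | (exfalso; omega)
        rw [Finset.sum_congr rfl fun k _ => h3 k, Finset.sum_neg_distrib, sum_ite_coe_eq,
          dif_pos hj]
        ring
      · rw [fusedPrec, if_neg hij, dif_neg (by omega), dif_neg (by omega),
          diagonal_apply_ne _ hij]
        rw [Finset.sum_eq_zero fun k _ => by split_ifs <;> first | ring1 | (exfalso; omega)]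
        ring

/-- `det(Σ⁻¹_{τ,w}) ≥ ∏_{i=1}^p 1/(2τ²ᵢ)`. -/
theorem fusedPrec_det_lower_bound (p : ℕ) (hp : 2 ≤ p) (τ : Fin p → ℝ)
    (w : Fin (p - 1) → ℝ) (hτ : ∀ i, 0 < τ i) (hw : ∀ i, 0 < w i) :
    (∏ i, (2 * τ i)⁻¹) ≤ (fusedPrec p τ w).det := by
  rw [fusedPrec_decomp p τ w hw]
  have hD : (diagonal fun i : Fin p => (τ i)⁻¹).PosDef :=
    posDef_diagonal_iff.mpr fun i => inv_pos.mpr (hτ i)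
  have hsum : (∑ k : Fin (p - 1),
      vecMulVec (fusedVec p w k) (fusedVec p w k)).PosSemidef := by
    refine Finset.sum_induction _ _ (fun a b ha hb => ha.add hb) .zero
      (fun k _ => posSemidef_vecMulVec_self _)
  calc (∏ i, (2 * τ i)⁻¹) ≤ ∏ i, (τ i)⁻¹ := by
        refine Finset.prod_le_prod (fun i _ => by have := hτ i; positivity) (fun i _ => ?_)
        have h := hτ i
        rw [inv_le_inv₀ (by linarith) h]
        linarith
    _ = (diagonal fun i : Fin p => (τ i)⁻¹).det := (det_diagonal).symm
    _ ≤ _ := det_le_det_add hD hsum
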